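/- (Multiplication formula for the digamma function) For every natural number q ≥ 1 and every real number x > 0, ψ(x) = log q + (1/q) · Σ_{r=0}^{q−1} ψ((r + x)/q), where ψ is the digamma function. -/

import Mathlib

open Real Filter Topology Set

/-- The digamma function, the logarithmic derivative of the real Gamma function. -/
noncomputable def digamma (x : ℝ) : ℝ := deriv (fun t => Real.log (Real.Gamma t)) x

lemma digamma_eq (x : ℝ) : digamma x = deriv (Real.log ∘ Real.Gamma) x := by
  simp only [digamma, Function.comp_def]

lemma diffAt_logGamma {x : ℝ} (hx : 0 < x) :
    DifferentiableAt ℝ (fun t => Real.log (Real.Gamma t)) x := by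
  refine ((Real.differentiableAt_Gamma ?_).log (Real.Gamma_ne_zero ?_)) <;>
    exact fun m => ((neg_nonpos.mpr m.cast_nonneg).trans_lt hx).ne'

lemma logGamma_rec {x : ℝ} (hx : 0 < x) :
    Real.log (Real.Gamma (x + 1)) = Real.log (Real.Gamma x) + Real.log x := by
  rw [Real.Gamma_add_one hx.ne', Real.log_mul hx.ne' (Real.Gamma_pos_of_pos hx).ne', add_comm]

lemma digamma_rec {x : ℝ} (hx : 0 < x) : digamma (x + 1) = digamma x + 1 / x := by
  unfold digamma
  rw [← deriv_comp_add_const, one_div, ← Real.deriv_log,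
    ← deriv_add (diffAt_logGamma hx) (Real.differentiableAt_log hx.ne')]
  apply Filter.EventuallyEq.deriv_eq
  filter_upwards [eventually_gt_nhds hx] with t ht using logGamma_rec ht

lemma digamma_mono {y z : ℝ} (hy : 0 < y) (hyz : y ≤ z) : digamma y ≤ digamma z := by
  rw [digamma_eq, digamma_eq]
  exact Real.convexOn_log_Gamma.monotoneOn_deriv
    (fun t ht => by simpa only [Function.comp_def] using diffAt_logGamma ht)
    (mem_Ioi.mpr hy) (mem_Ioi.mpr (hy.trans_le hyz)) hyz

lemma digamma_LB (n : ℕ) (hn : 0 < n) : Real.log n ≤ digamma (n + 1) := by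
  rw [digamma_eq]
  have hd : DifferentiableAt ℝ (Real.log ∘ Real.Gamma) ((n:ℝ) + 1) := by
    simpa only [Function.comp_def] using diffAt_logGamma (by positivity : (0:ℝ) < (n:ℝ) + 1)
  refine (le_of_eq ?_).trans <| Real.convexOn_log_Gamma.slope_le_deriv
    (mem_Ioi.mpr <| Nat.cast_pos.mpr hn) (by positivity : (0:ℝ) < (n:ℝ) + 1)
    (by linarith) hd
  rw [slope_def_field, show (n : ℝ) + 1 - n = 1 by ring, div_one]
  simp only [Function.comp_apply]
  rw [logGamma_rec (by positivity : (0:ℝ) < n), add_sub_cancel_left]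

lemma digamma_UB (n : ℕ) : digamma (n + 1) ≤ Real.log (n + 1) := by
  rw [digamma_eq]
  have hd : DifferentiableAt ℝ (Real.log ∘ Real.Gamma) ((n:ℝ) + 1) := by
    simpa only [Function.comp_def] using diffAt_logGamma (by positivity : (0:ℝ) < (n:ℝ) + 1)
  refine (Real.convexOn_log_Gamma.deriv_le_slope (by positivity : (0:ℝ) < (n:ℝ) + 1)
    (by positivity : (0:ℝ) < (n:ℝ) + 2) (by linarith) hd).trans (le_of_eq ?_)
  rw [slope_def_field, show (n : ℝ) + 2 - (n + 1) = 1 by ring, div_one]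
  simp only [Function.comp_apply]
  rw [show (n : ℝ) + 2 = (n + 1) + 1 by ring, logGamma_rec (by positivity : (0:ℝ) < (n:ℝ) + 1),
    add_sub_cancel_left]

/-- `log (t + a) - log t → 0` as `t → ∞`. -/
lemma log_add_sub_log (a : ℝ) :
    Tendsto (fun t : ℝ => Real.log (t + a) - Real.log t) atTop (𝓝 0) := by
  have h1 : Tendsto (fun t : ℝ => 1 + a * t⁻¹) atTop (𝓝 1) := by
    simpa using tendsto_const_nhds.add (tendsto_inv_atTop_zero.const_mul a)
  have h2 : Tendsto (fun t : ℝ => (t + a) / t) atTop (𝓝 1) := by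
    refine h1.congr' ?_
    filter_upwards [eventually_gt_atTop (0 : ℝ)] with t ht
    field_simp
  have h3 : Tendsto (fun t : ℝ => Real.log ((t + a) / t)) atTop (𝓝 0) := by
    have := (Real.continuousAt_log one_ne_zero).tendsto.comp h2
    simpa [Function.comp_def] using this
  refine h3.congr' ?_
  filter_upwards [eventually_gt_atTop (max 0 (-a))] with t ht
  have ht0 : 0 < t := lt_of_le_of_lt (le_max_left _ _) ht
  have hta : 0 < t + a := by have := lt_of_le_of_lt (le_max_right _ _) ht; linarith
  rw [Real.log_div hta.ne' ht0.ne']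

/-- `digamma t - log t → 0` as `t → ∞`. -/
lemma digamma_sub_log : Tendsto (fun t : ℝ => digamma t - Real.log t) atTop (𝓝 0) := by
  have hLB : Tendsto (fun t : ℝ => Real.log (t + (-2)) - Real.log t) atTop (𝓝 0) :=
    log_add_sub_log (-2)
  have hUB : Tendsto (fun t : ℝ => Real.log (t + 1) - Real.log t) atTop (𝓝 0) :=
    log_add_sub_log 1
  refine tendsto_of_tendsto_of_tendsto_of_le_of_le' hLB hUB ?_ ?_
  · filter_upwards [eventually_ge_atTop (3 : ℝ)] with t ht
    have ht0 : (0:ℝ) < t := by linarith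
    set n := ⌊t⌋₊ with hn
    have hn3 : 3 ≤ n := Nat.le_floor ht
    have hnt : (n : ℝ) ≤ t := Nat.floor_le ht0.le
    have htn : t < n + 1 := Nat.lt_floor_add_one t
    have key : Real.log ((n:ℝ) - 1) ≤ digamma t := by
      have h1 : Real.log ((n - 1 : ℕ) : ℝ) ≤ digamma (((n - 1 : ℕ) : ℝ) + 1) :=
        digamma_LB (n - 1) (by omega)
      have hcast : ((n - 1 : ℕ) : ℝ) = (n : ℝ) - 1 := by
        have : (1:ℕ) ≤ n := by omega
        push_cast [this]; ring
      rw [hcast] at h1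
      refine h1.trans ?_
      rw [sub_add_cancel]
      exact digamma_mono (by positivity) hnt
    refine sub_le_sub_right (le_trans ?_ key) _
    gcongr <;> linarith
  · filter_upwards [eventually_ge_atTop (3 : ℝ)] with t ht
    have ht0 : (0:ℝ) < t := by linarith
    set n := ⌊t⌋₊ with hn
    have hnt : (n : ℝ) ≤ t := Nat.floor_le ht0.le
    have htn : t < n + 1 := Nat.lt_floor_add_one t
    have key : digamma t ≤ Real.log ((n:ℝ) + 1) := by
      refine le_trans (digamma_mono ht0 htn.le) (digamma_UB n)
    refine sub_le_sub_right (le_trans key (Real.log_le_log (by positivity) (by linarith))) _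

theorem digamma_multiplication (q : ℕ) (hq : 1 ≤ q) (x : ℝ) (hx : 0 < x) :
    digamma x = Real.log q + (1 / q) * ∑ r ∈ Finset.range q, digamma (((r : ℝ) + x) / q) := by
  have hq0 : (0:ℝ) < q := by exact_mod_cast hq
  set h : ℝ → ℝ := fun t =>
    digamma t - (Real.log q + (1 / q) * ∑ r ∈ Finset.range q, digamma (((r : ℝ) + t) / q))
    with hh
  -- Step 1: periodicity
  have hper : ∀ t : ℝ, 0 < t → h (t + 1) = h t := by
    intro t ht
    have htq : 0 < t / q := by positivity
    set G : ℕ → ℝ := fun r => digamma (((r:ℝ) + t) / q) with hG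
    have hGq : G q = G 0 + (q:ℝ) / t := by
      have e : ((q:ℝ) + t) / q = t / q + 1 := by field_simp; ring
      have e0 : (((0:ℕ):ℝ) + t) / q = t / q := by norm_num
      simp only [hG, e, e0, digamma_rec htq]
      rw [one_div_div]
    have e3 : ∑ r ∈ Finset.range q, digamma (((r:ℝ) + (t + 1)) / q)
        = (∑ r ∈ Finset.range q, G r) + (q:ℝ) / t := by
      have e4 : ∀ r ∈ Finset.range q,
          digamma (((r:ℝ) + (t + 1)) / q) = (G (r + 1) - G r) + G r := by
        intro r _
        have : ((r:ℝ) + (t + 1)) / q = ((((r+1:ℕ)):ℝ) + t) / q := by push_cast; ring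
        simp only [hG, this, sub_add_cancel]
      rw [Finset.sum_congr rfl e4, Finset.sum_add_distrib, Finset.sum_range_sub G q, hGq]
      ring
    simp only [hh, digamma_rec ht, e3, hG]
    field_simp
    ring
  -- Step 2: h (x + n) = h x
  have hper' : ∀ n : ℕ, h (x + n) = h x := by
    intro n
    induction n with
    | zero => simp
    | succ n ih =>
      have : x + ((n : ℝ) + 1) = (x + n) + 1 := by ring
      rw [Nat.cast_succ, this, hper (x + n) (by positivity), ih]
  -- Step 3: h tends to 0 at infinity
  have hC : ∀ r ∈ Finset.range q, Tendsto (fun t : ℝ =>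
      (digamma (((r:ℝ) + t) / q) - Real.log (((r:ℝ) + t) / q))
        + (Real.log ((r:ℝ) + t) - Real.log t)) atTop (𝓝 0) := by
    intro r _
    have ht1 : Tendsto (fun t : ℝ => ((r:ℝ) + t) / q) atTop atTop :=
      (tendsto_atTop_add_const_left atTop (r:ℝ) tendsto_id).atTop_div_const hq0
    have p1 : Tendsto (fun t : ℝ =>
        digamma (((r:ℝ) + t) / q) - Real.log (((r:ℝ) + t) / q)) atTop (𝓝 0) :=
      digamma_sub_log.comp ht1
    have p2 : Tendsto (fun t : ℝ => Real.log ((r:ℝ) + t) - Real.log t) atTop (𝓝 0) := by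
      have := log_add_sub_log (r:ℝ)
      refine this.congr (fun t => by rw [add_comm])
    simpa using p1.add p2
  have hsumlim : Tendsto (fun t : ℝ => (1/(q:ℝ)) * ∑ r ∈ Finset.range q,
      ((digamma (((r:ℝ) + t) / q) - Real.log (((r:ℝ) + t) / q))
        + (Real.log ((r:ℝ) + t) - Real.log t))) atTop (𝓝 0) := by
    have := (tendsto_finset_sum (Finset.range q) hC).const_mul (1/(q:ℝ))
    simpa using this
  have hhlim : Tendsto h atTop (𝓝 0) := by
    have base := digamma_sub_log.sub hsumlim
    rw [sub_zero] at base
    refine base.congr' ?_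
    filter_upwards [eventually_gt_atTop (0:ℝ)] with t ht
    have hlogd : ∀ r ∈ Finset.range q,
        Real.log (((r:ℝ) + t) / q) = Real.log ((r:ℝ) + t) - Real.log q := by
      intro r _
      exact Real.log_div (add_pos_of_nonneg_of_pos (r.cast_nonneg) ht).ne' hq0.ne'
    have key : ∑ r ∈ Finset.range q,
        ((digamma (((r:ℝ) + t) / q) - Real.log (((r:ℝ) + t) / q))
          + (Real.log ((r:ℝ) + t) - Real.log t))
        = (∑ r ∈ Finset.range q, digamma (((r:ℝ) + t) / q))
          + (q:ℝ) * (Real.log q - Real.log t) := by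
      have e5 : ∀ r ∈ Finset.range q,
          (digamma (((r:ℝ) + t) / q) - Real.log (((r:ℝ) + t) / q))
            + (Real.log ((r:ℝ) + t) - Real.log t)
          = digamma (((r:ℝ) + t) / q) + (Real.log q - Real.log t) := by
        intro r hr
        rw [hlogd r hr]; ring
      rw [Finset.sum_congr rfl e5, Finset.sum_add_distrib, Finset.sum_const,
        Finset.card_range, nsmul_eq_mul]
    rw [key, hh]
    field_simp
    ring
  -- Step 4: conclude
  have hseq : Tendsto (fun n : ℕ => h (x + n)) atTop (𝓝 0) :=
    hhlim.comp (tendsto_atTop_add_const_left atTop x tendsto_natCast_atTop_atTop)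
  have hx0 : h x = 0 := by
    refine tendsto_nhds_unique (l := atTop (α := ℕ)) tendsto_const_nhds ?_
    exact hseq.congr fun n => hper' n
  simp only [hh] at hx0
  linarith
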